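/- Let a and b be non-commuting elements of a free group F with a fixed free generating set, and let k be a positive integer. Then at least one of the four elements a, b, a^{20k} b a^{-20k}, b^{20k} a b^{-20k} has wing of length at least k. -/

import Mathlib

/-- The formal inverse of a word. -/
def wInv {α : Type*} (W : List (α × Bool)) : List (α × Bool) :=
  (W.map fun p => (p.1, !p.2)).reverse

/-- A word is reduced iff it is the reduced word of the free-group element it represents. -/
def IsReducedWord {α : Type*} [DecidableEq α] (W : List (α × Bool)) : Prop :=
  (FreeGroup.mk W).toWord = W

set_option linter.unusedSectionVars false

namespace WingProof

variable {α : Type*} [DecidableEq α]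

def R (p q : α × Bool) : Prop := ¬(p.1 = q.1 ∧ p.2 = !q.2)

def Red (L : List (α × Bool)) : Prop := List.Chain' R L

lemma wInv_eq_invRev (W : List (α × Bool)) : wInv W = FreeGroup.invRev W := rfl

lemma wInv_append (U V : List (α × Bool)) : wInv (U ++ V) = wInv V ++ wInv U := by
  simp [wInv]

lemma wInv_cons (x : α × Bool) (U : List (α × Bool)) :
    wInv (x :: U) = wInv U ++ [(x.1, !x.2)] := by simp [wInv]

lemma wInv_nil : wInv ([] : List (α × Bool)) = [] := rfl

lemma wInv_singleton (x : α × Bool) : wInv [x] = [(x.1, !x.2)] := rfl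

lemma wInv_length (U : List (α × Bool)) : (wInv U).length = U.length := by simp [wInv]

lemma mk_wInv (U : List (α × Bool)) : FreeGroup.mk (wInv U) = (FreeGroup.mk U)⁻¹ := by
  rw [FreeGroup.inv_mk, wInv_eq_invRev]

lemma R_symm {p q : α × Bool} (h : R p q) : R q p := by
  rcases p with ⟨a, b⟩; rcases q with ⟨c, d⟩
  simp only [R] at h ⊢
  rintro ⟨rfl, rfl⟩
  exact h ⟨rfl, by simp⟩

lemma Red_wInv {U : List (α × Bool)} (h : Red U) : Red (wInv U) := by
  rw [Red, wInv]; unfold List.Chain'; rw [List.isChain_reverse]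
  refine List.isChain_map_of_isChain (fun p : α × Bool => (p.1, !p.2)) ?_ h
  intro p q hpq
  show R (q.1, !q.2) (p.1, !p.2)
  rcases p with ⟨a, b⟩; rcases q with ⟨c, d⟩
  simp only [R] at hpq ⊢
  rintro ⟨rfl, h2⟩
  refine hpq ⟨rfl, ?_⟩
  revert h2; cases b <;> cases d <;> simp

lemma red_reduce_eq_self {L : List (α × Bool)} (h : Red L) : FreeGroup.reduce L = L := by
  induction L with
  | nil => rfl
  | cons x L ih =>
    have hL : Red L := h.tail
    rw [FreeGroup.reduce.cons, ih hL]
    cases L with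
    | nil => rfl
    | cons hd tl =>
      have hR : R x hd := List.isChain_cons_cons.mp h |>.1
      simp only [R] at hR
      simp [if_neg hR]

lemma reduce_eq_self_red {L : List (α × Bool)} (h : FreeGroup.reduce L = L) : Red L := by
  induction L with
  | nil => exact List.isChain_nil
  | cons x L ih =>
    rw [FreeGroup.reduce.cons] at h
    rcases hM : FreeGroup.reduce L with _ | ⟨hd, tl⟩
    · rw [hM] at h
      replace h : [x] = x :: L := h
      have : L = [] := by injection h with h1 h2; exact h2.symm
      subst this
      exact List.isChain_singleton x
    · rw [hM] at h
      replace h : (if x.1 = hd.1 ∧ x.2 = !hd.2 then tl else x :: hd :: tl) = x :: L := h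
      by_cases hc : x.1 = hd.1 ∧ x.2 = !hd.2
      · rw [if_pos hc] at h
        exfalso
        have h1 : tl.length + 1 ≤ L.length := by
          have := (FreeGroup.reduce.red (L := L)).length_le
          rw [hM] at this
          simpa using this
        rw [h] at h1
        simp at h1
      · rw [if_neg hc] at h
        have hL : L = hd :: tl := by
          injection h with h1 h2
          exact h2.symm
        subst hL
        have : FreeGroup.reduce (hd :: tl) = hd :: tl := hM
        exact List.isChain_cons_cons.mpr ⟨hc, ih this⟩

lemma isReducedWord_iff {L : List (α × Bool)} : IsReducedWord L ↔ Red L := by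
  rw [IsReducedWord, FreeGroup.toWord_mk]
  exact ⟨reduce_eq_self_red, red_reduce_eq_self⟩

lemma toWord_mk_red {L : List (α × Bool)} (h : Red L) :
    (FreeGroup.mk L).toWord = L := by
  rw [FreeGroup.toWord_mk]; exact red_reduce_eq_self h

lemma toWord_red (x : FreeGroup α) : Red x.toWord :=
  reduce_eq_self_red (FreeGroup.reduce_toWord x)

lemma toWord_eq_of_red {x : FreeGroup α} {L : List (α × Bool)} (h : Red L)
    (hx : x = FreeGroup.mk L) : x.toWord = L := by
  rw [hx]; exact toWord_mk_red h

lemma Red_append_left {U V : List (α × Bool)} (h : Red (U ++ V)) : Red U :=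
  (List.isChain_append.mp h).1

lemma Red_append_right {U V : List (α × Bool)} (h : Red (U ++ V)) : Red V :=
  (List.isChain_append.mp h).2.1

lemma Red_prefix {U V : List (α × Bool)} (h : U <+: V) (hV : Red V) : Red U := by
  obtain ⟨t, rfl⟩ := h
  exact Red_append_left hV

lemma Red_infix {U V : List (α × Bool)} (h : U <:+: V) (hV : Red V) : Red U := by
  obtain ⟨s, t, rfl⟩ := h
  exact Red_append_left (Red_append_right (by rwa [List.append_assoc] at hV))
/-- n-fold concatenation power of a word. -/
def pw (P : List (α × Bool)) (n : ℕ) : List (α × Bool) := (List.replicate n P).flatten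

lemma pw_zero (P : List (α × Bool)) : pw P 0 = [] := rfl

lemma pw_succ (P : List (α × Bool)) (n : ℕ) : pw P (n + 1) = P ++ pw P n := by
  simp [pw, List.replicate_succ]

lemma pw_one (P : List (α × Bool)) : pw P 1 = P := by simp [pw]

lemma pw_add (P : List (α × Bool)) (m n : ℕ) : pw P (m + n) = pw P m ++ pw P n := by
  rw [pw, pw, pw, List.replicate_add, List.flatten_append]

lemma length_pw (P : List (α × Bool)) (n : ℕ) : (pw P n).length = n * P.length := by
  simp [pw]

lemma mk_pw (P : List (α × Bool)) (n : ℕ) : FreeGroup.mk (pw P n) = (FreeGroup.mk P) ^ n := by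
  induction n with
  | zero => rfl
  | succ n ih => rw [pw_succ, ← FreeGroup.mul_mk, ih, pow_succ']

lemma pw_take (P : List (α × Bool)) {m f j : ℕ} (hf : f ≤ m) (hj : j ≤ P.length)
    (h0 : f < m ∨ j = 0) :
    (pw P m).take (f * P.length + j) = pw P f ++ P.take j := by
  rcases Nat.lt_or_ge f m with hfm | hfm
  · have hsplit : pw P m = pw P f ++ (P ++ pw P (m - f - 1)) := by
      rw [← pw_succ, ← pw_add]
      congr 1
      omega
    rw [hsplit]
    have h1 : f * P.length = (pw P f).length := (length_pw P f).symm
    rw [h1, List.take_length_add_append, List.take_append_of_le_length hj]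
  · have hfm' : f = m := le_antisymm hf hfm
    subst hfm'
    have : (pw P f).take (f * P.length + j) = pw P f := by
      apply List.take_of_length_le
      rw [length_pw]
      omega
    rcases h0 with h0 | h0
    · omega
    · subst h0
      simpa using this

lemma pw_drop (P : List (α × Bool)) {m f j : ℕ} (hfm : f < m) (hj : j ≤ P.length) :
    (pw P m).drop (f * P.length + j) = P.drop j ++ pw P (m - f - 1) := by
  have hsplit : pw P m = pw P f ++ (P ++ pw P (m - f - 1)) := by
    rw [← pw_succ, ← pw_add]; congr 1; omega
  rw [hsplit]
  have h1 : f * P.length = (pw P f).length := (length_pw P f).symm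
  rw [h1, List.drop_length_add_append, List.drop_append_of_le_length hj]

lemma pw_rot (P : List (α × Bool)) {j : ℕ} (hj : j ≤ P.length) (t : ℕ) :
    P.drop j ++ pw P t ++ P.take j = pw (P.drop j ++ P.take j) (t + 1) := by
  induction t with
  | zero => simp [pw_zero, pw_one]
  | succ t ih =>
    rw [pw_succ P t, pw_succ, ← ih]
    obtain ⟨T, D, hTD, hT, hD⟩ : ∃ T D, T ++ D = P ∧ P.take j = T ∧ P.drop j = D :=
      ⟨_, _, List.take_append_drop j P, rfl, rfl⟩
    rw [hT, hD, ← hTD]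
    simp

lemma pw_nil (n : ℕ) : pw ([] : List (α × Bool)) n = [] := by simp [pw]

lemma pw_prefix_pw (P : List (α × Bool)) {n m : ℕ} (h : n ≤ m) : pw P n <+: pw P m := by
  refine ⟨pw P (m - n), ?_⟩
  rw [← pw_add]; congr 1; omega

lemma head?_pw (P : List (α × Bool)) {n : ℕ} (hn : 0 < n) (hP : P ≠ []) :
    (pw P n).head? = P.head? := by
  obtain ⟨n, rfl⟩ : ∃ m, n = m + 1 := ⟨n - 1, by omega⟩
  rw [pw_succ]
  cases P with
  | nil => simp at hP
  | cons x t => simp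

lemma Red_pw {P : List (α × Bool)} (h : Red (P ++ P)) (n : ℕ) : Red (pw P n) := by
  have hP : Red P := Red_append_left h
  have hJ := (List.isChain_append.mp h).2.2
  induction n with
  | zero => exact List.isChain_nil
  | succ n ih =>
    rw [pw_succ]
    refine List.isChain_append.mpr ⟨hP, ih, ?_⟩
    intro x hx y hy
    rcases Nat.eq_zero_or_pos n with rfl | hn
    · simp [pw_zero] at hy
    · rcases List.eq_nil_or_concat P with rfl | _
      · simp [pw_nil] at hy
      · have hPne : P ≠ [] := by rintro rfl; simp [pw_nil] at hy
        rw [head?_pw P hn hPne] at hy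
        exact hJ x hx y hy

lemma prefix_take_eq {M W : List (α × Bool)} (h : M <+: W) {j : ℕ} (hj : j ≤ M.length) :
    M.take j = W.take j := by
  obtain ⟨t, rfl⟩ := h
  rw [List.take_append_of_le_length hj]

lemma prefix_drop_pw {M C : List (α × Bool)} {n : ℕ} (h : M <+: pw C n)
    (hC : 0 < C.length) (hlen : C.length ≤ M.length) :
    C <+: M ∧ M.drop C.length <+: pw C (n - 1) := by
  have hn : 0 < n := by
    rcases Nat.eq_zero_or_pos n with rfl | hn
    · exfalso
      have := h.length_le
      rw [length_pw] at this
      omega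
    · exact hn
  have hsplit : pw C n = C ++ pw C (n - 1) := by
    rw [← pw_succ]; congr 1; omega
  have hCpre : M.take C.length = C := by
    rw [prefix_take_eq h hlen, hsplit, List.take_append_of_le_length le_rfl, List.take_length]
  constructor
  · refine ⟨M.drop C.length, ?_⟩
    conv_rhs => rw [← List.take_append_drop C.length M]
    rw [hCpre]
  · obtain ⟨t, ht⟩ := h
    rw [hsplit] at ht
    refine ⟨t, ?_⟩
    have e := congrArg (List.drop C.length) ht
    rw [List.drop_append_of_le_length hlen, List.drop_append_of_le_length le_rfl,
      List.drop_length] at e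
    simpa using e

lemma pref_take_aux {M C D : List (α × Bool)} {nc nd : ℕ}
    (hC0 : 0 < C.length) (hD0 : 0 < D.length)
    (hMC : M <+: pw C nc) (hMD : M <+: pw D nd)
    (hlen : C.length + D.length ≤ M.length) :
    M.take (C.length + D.length) = C ++ D := by
  obtain ⟨hCM, hdrop⟩ := prefix_drop_pw hMC hC0 (by omega)
  have hD : M.take D.length = D := by
    obtain ⟨hDM, _⟩ := prefix_drop_pw hMD hD0 (by omega)
    obtain ⟨t, rfl⟩ := hDM
    rw [List.take_append_of_le_length le_rfl, List.take_length]
  have hC : M.take C.length = C := by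
    obtain ⟨t, rfl⟩ := hCM
    rw [List.take_append_of_le_length le_rfl, List.take_length]
  rw [List.take_add, hC]
  congr 1
  -- (M.drop C.length).take D.length = D
  have h1 : (M.drop C.length).take D.length = (pw C (nc - 1)).take D.length :=
    prefix_take_eq hdrop (by simp; omega)
  have h2 : M.take D.length = (pw C nc).take D.length :=
    prefix_take_eq hMC (by omega)
  have h3 : (pw C (nc - 1)).take D.length = (pw C nc).take D.length := by
    apply prefix_take_eq (pw_prefix_pw C (by omega))
    have := hdrop.length_le
    simp at this
    rw [length_pw]
    calc D.length ≤ M.length - C.length := by omega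
    _ ≤ (nc - 1) * C.length := by rw [← length_pw]; omega
  rw [h1, h3, ← h2, hD]

lemma pref_comm {M C D : List (α × Bool)} {nc nd : ℕ}
    (hC0 : 0 < C.length) (hD0 : 0 < D.length)
    (hMC : M <+: pw C nc) (hMD : M <+: pw D nd)
    (hlen : C.length + D.length ≤ M.length) :
    C ++ D = D ++ C := by
  have h1 := pref_take_aux hC0 hD0 hMC hMD hlen
  have h2 := pref_take_aux hD0 hC0 hMD hMC (by omega)
  rw [← h1, ← h2, Nat.add_comm]

lemma R_of_ne {x b : α × Bool} (h : b ≠ (x.1, !x.2)) : R x b := by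
  rintro ⟨h1, h2⟩
  apply h
  have hb2 : b.2 = !x.2 := by rw [h2]; simp
  rw [Prod.ext_iff]
  exact ⟨h1.symm, hb2⟩

lemma ne_of_R {x b : α × Bool} (h : R x b) : b ≠ (x.1, !x.2) := by
  rintro rfl
  exact h ⟨rfl, by simp⟩

lemma last_junction {Z₀ : List (α × Bool)} {x : α × Bool} (h : Red (Z₀ ++ [x])) :
    ∀ a ∈ Z₀.getLast?, R a x := by
  intro a ha
  have := (List.isChain_append.mp h).2.2
  exact this a ha x (by simp)

/-- Cancellation normal form for a product of two reduced words. -/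
lemma cancel_pair {U : List (α × Bool)} : ∀ {V : List (α × Bool)}, Red U → Red V →
    ∃ U₁ S V₁, U = U₁ ++ S ∧ V = wInv S ++ V₁ ∧ Red (U₁ ++ V₁) := by
  induction U using List.reverseRecOn with
  | nil =>
    intro V _ hV
    exact ⟨[], [], V, by simp, by simp [wInv_nil], by simpa⟩
  | append_singleton U₀ x ih =>
    intro V hU hV
    have hU₀ : Red U₀ := Red_append_left hU
    cases V with
    | nil => exact ⟨U₀ ++ [x], [], [], by simp, by simp [wInv_nil], by simpa⟩
    | cons y V₀ =>
      by_cases hxy : y = (x.1, !x.2)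
      · obtain ⟨U₁, S', V₁, h1, h2, h3⟩ := ih hU₀ (show Red V₀ from hV.tail)
        subst hxy
        refine ⟨U₁, S' ++ [x], V₁, by rw [h1]; simp, ?_, h3⟩
        simp [wInv_append, wInv_singleton, h2]
      · refine ⟨U₀ ++ [x], [], y :: V₀, by simp, by simp [wInv_nil], ?_⟩
        refine List.isChain_append.mpr ⟨hU, hV, ?_⟩
        intro a ha b hb
        simp at ha hb
        subst ha; subst hb
        exact R_of_ne hxy

lemma getLast?_append_right {β : Type*} {l₁ l₂ : List β} (h : l₂ ≠ []) :
    (l₁ ++ l₂).getLast? = l₂.getLast? := by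
  rw [List.getLast?_append]
  cases hl : l₂.getLast? with
  | none => exact absurd (List.getLast?_eq_none_iff.mp hl) h
  | some a => rfl

lemma getLast?_pw (P : List (α × Bool)) {n : ℕ} (hn : 0 < n) :
    (pw P n).getLast? = P.getLast? := by
  have : pw P n = pw P (n - 1) ++ P := by
    calc pw P n = pw P ((n - 1) + 1) := by congr 1; omega
    _ = pw P (n - 1) ++ pw P 1 := pw_add P _ _
    _ = pw P (n - 1) ++ P := by rw [pw_one]
  rw [this]
  rcases eq_or_ne P [] with rfl | hP
  · simp [pw_nil]
  · exact getLast?_append_right hP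

lemma pw_shift (u v : List (α × Bool)) (m : ℕ) :
    u ++ pw (v ++ u) m = pw (u ++ v) m ++ u := by
  induction m with
  | zero => simp [pw_zero]
  | succ m ih =>
    rw [pw_succ, pw_succ]
    calc u ++ ((v ++ u) ++ pw (v ++ u) m) = (u ++ v) ++ (u ++ pw (v ++ u) m) := by simp
    _ = (u ++ v) ++ (pw (u ++ v) m ++ u) := by rw [ih]
    _ = ((u ++ v) ++ pw (u ++ v) m) ++ u := by simp

lemma Red_rot {B : List (α × Bool)} (hB : Red (B ++ B)) {j : ℕ} :
    Red ((B.drop j ++ B.take j) ++ (B.drop j ++ B.take j)) := by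
  obtain ⟨t1, d1, htd, ht, hd⟩ : ∃ t1 d1, t1 ++ d1 = B ∧ B.take j = t1 ∧ B.drop j = d1 :=
    ⟨_, _, List.take_append_drop j B, rfl, rfl⟩
  rw [ht, hd]
  refine Red_infix ⟨t1, d1, ?_⟩ (Red_pw hB 3)
  rw [show pw B 3 = B ++ B ++ B from by rw [show (3:ℕ) = 1+1+1 from rfl, pw_add, pw_add, pw_one]]
  rw [← htd]
  simp

/-- Conjugation normal form: conjugating a cyclically reduced word by a reduced word. -/
lemma conj_core {Z : List (α × Bool)} : ∀ {B : List (α × Bool)}, Red Z → Red (B ++ B) → B ≠ [] →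
    ∃ Z₁ T T₀ B₁ P m,
      Z = Z₁ ++ T ∧
      (P = B ∨ P = wInv B) ∧
      pw P m = T₀ ++ T ∧
      B₁ ≠ [] ∧ B₁.length = B.length ∧ Red (B₁ ++ B₁) ∧
      Red (Z₁ ++ B₁ ++ wInv Z₁) ∧
      FreeGroup.mk Z₁ * FreeGroup.mk B₁ * (FreeGroup.mk Z₁)⁻¹
        = FreeGroup.mk Z * FreeGroup.mk B * (FreeGroup.mk Z)⁻¹ := by
  induction Z using List.reverseRecOn with
  | nil =>
    intro B hZ hB hBne
    refine ⟨[], [], [], B, B, 0, by simp, Or.inl rfl, by simp [pw_zero], hBne, rfl,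
      hB, ?_, by rw [← FreeGroup.one_eq_mk]⟩
    rw [wInv_nil, List.append_nil, List.nil_append]
    exact Red_append_left hB
  | append_singleton Z₀ x ih =>
    intro B hZ hB hBne
    have hZ₀ : Red Z₀ := Red_append_left hZ
    have hxinv : FreeGroup.mk [(x.1, !x.2)] = (FreeGroup.mk [x])⁻¹ := by
      rw [← wInv_singleton, mk_wInv]
    rcases hBc : B with _ | ⟨b0, C⟩
    · exact absurd hBc hBne
    subst hBc
    by_cases hL : b0 = (x.1, !x.2)
    · -- cancellation on the left of the core
      subst hL
      have hB' : Red ((C ++ [(x.1, !x.2)]) ++ (C ++ [(x.1, !x.2)])) := by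
        have h := Red_rot hB (j := 1)
        simpa using h
      obtain ⟨Z₁, T', T₀', B₁, P', m', hZeq, hP', hpw', hB₁ne, hB₁len, hB₁red, hfin, hgrp⟩ :=
        ih hZ₀ hB' (by simp)
      have e2 : wInv (C ++ [(x.1, !x.2)]) = [x] ++ wInv C := by
        rw [wInv_append, wInv_singleton]; simp
      have key : ∃ T₀ P m, (P = ((x.1, !x.2) :: C) ∨ P = wInv ((x.1, !x.2) :: C)) ∧
          pw P m = T₀ ++ (T' ++ [x]) := by
        have e1 : wInv ((x.1, !x.2) :: C) = wInv C ++ [x] := by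
          rw [wInv_cons]; simp
        rcases eq_or_ne T' [] with rfl | hT'ne
        · refine ⟨wInv C, wInv ((x.1, !x.2) :: C), 1, Or.inr rfl, ?_⟩
          rw [pw_one, e1]; simp
        · have hm' : 0 < m' := by
            rcases Nat.eq_zero_or_pos m' with rfl | h
            · rw [pw_zero] at hpw'
              exact absurd (List.append_eq_nil_iff.mp hpw'.symm).2 hT'ne
            · exact h
          have hP'' : P' = wInv (C ++ [(x.1, !x.2)]) := by
            rcases hP' with rfl | h
            · exfalso
              have h1 : (pw (C ++ [(x.1, !x.2)]) m').getLast? = some (x.1, !x.2) := by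
                rw [getLast?_pw _ hm']
                simp
              rw [hpw', getLast?_append_right hT'ne] at h1
              have h2 : Z₀.getLast? = some (x.1, !x.2) := by
                rw [hZeq, getLast?_append_right hT'ne, h1]
              have := last_junction hZ _ h2
              exact this ⟨rfl, rfl⟩
            · exact h
          subst hP''
          rw [e2] at hpw'
          refine ⟨wInv C ++ T₀', wInv ((x.1, !x.2) :: C), m' + 1, Or.inr rfl, ?_⟩
          rw [pw_succ, e1]
          calc (wInv C ++ [x]) ++ pw (wInv C ++ [x]) (m')
              = wInv C ++ ([x] ++ pw (wInv C ++ [x]) m') := by simp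
            _ = wInv C ++ (pw ([x] ++ wInv C) m' ++ [x]) := by rw [pw_shift]
            _ = wInv C ++ ((T₀' ++ T') ++ [x]) := by rw [hpw']
            _ = (wInv C ++ T₀') ++ (T' ++ [x]) := by simp
      obtain ⟨T₀, P, m, hPor, hpw⟩ := key
      refine ⟨Z₁, T' ++ [x], T₀, B₁, P, m, by rw [hZeq, List.append_assoc], hPor, hpw,
        hB₁ne, by simpa using hB₁len, hB₁red, hfin, ?_⟩
      rw [hgrp]
      have h1 : FreeGroup.mk ((x.1, !x.2) :: C) = (FreeGroup.mk [x])⁻¹ * FreeGroup.mk C := by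
        rw [← hxinv, FreeGroup.mul_mk]; rfl
      have h2 : FreeGroup.mk (C ++ [(x.1, !x.2)]) = FreeGroup.mk C * (FreeGroup.mk [x])⁻¹ := by
        rw [← hxinv, FreeGroup.mul_mk]
      have h3 : FreeGroup.mk (Z₀ ++ [x]) = FreeGroup.mk Z₀ * FreeGroup.mk [x] := by
        rw [FreeGroup.mul_mk]
      rw [h1, h2, h3]
      group
    · obtain ⟨C', z, hCz⟩ : ∃ C' z, b0 :: C = C' ++ [z] := by
        rcases List.eq_nil_or_concat (b0 :: C) with h | ⟨C', z, h⟩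
        · simp at h
        · exact ⟨C', z, by simpa [List.concat_eq_append] using h⟩
      by_cases hR : z = x
      · -- cancellation on the right of the core
        rw [hR] at hCz
        rw [hCz] at hB hBne ⊢
        have hB' : Red (([x] ++ C') ++ ([x] ++ C')) := by
          have h := Red_rot hB (j := C'.length)
          rwa [List.drop_left, List.take_left] at h
        obtain ⟨Z₁, T', T₀', B₁, P', m', hZeq, hP', hpw', hB₁ne, hB₁len, hB₁red, hfin, hgrp⟩ :=
          ih hZ₀ hB' (by simp)
        have key : ∃ T₀ P m, (P = (C' ++ [x]) ∨ P = wInv (C' ++ [x])) ∧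
            pw P m = T₀ ++ (T' ++ [x]) := by
          rcases eq_or_ne T' [] with rfl | hT'ne
          · exact ⟨C', C' ++ [x], 1, Or.inl rfl, by rw [pw_one]; simp⟩
          · have hm' : 0 < m' := by
              rcases Nat.eq_zero_or_pos m' with rfl | h
              · rw [pw_zero] at hpw'
                exact absurd (List.append_eq_nil_iff.mp hpw'.symm).2 hT'ne
              · exact h
            have hP'' : P' = [x] ++ C' := by
              rcases hP' with h | rfl
              · exact h
              · exfalso
                have h1 : (pw (wInv ([x] ++ C')) m').getLast? = some (x.1, !x.2) := by
                  rw [getLast?_pw _ hm', wInv_append, wInv_singleton]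
                  simp
                rw [hpw', getLast?_append_right hT'ne] at h1
                have h2 : Z₀.getLast? = some (x.1, !x.2) := by
                  rw [hZeq, getLast?_append_right hT'ne, h1]
                have := last_junction hZ _ h2
                exact this ⟨rfl, rfl⟩
            subst hP''
            refine ⟨C' ++ T₀', C' ++ [x], m' + 1, Or.inl rfl, ?_⟩
            rw [pw_succ]
            calc (C' ++ [x]) ++ pw (C' ++ [x]) m'
                = C' ++ ([x] ++ pw (C' ++ [x]) m') := by simp
              _ = C' ++ (pw ([x] ++ C') m' ++ [x]) := by rw [pw_shift]
              _ = C' ++ ((T₀' ++ T') ++ [x]) := by rw [hpw']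
              _ = (C' ++ T₀') ++ (T' ++ [x]) := by simp
        obtain ⟨T₀, P, m, hPor, hpw⟩ := key
        refine ⟨Z₁, T' ++ [x], T₀, B₁, P, m, by rw [hZeq, List.append_assoc], hPor, hpw,
          hB₁ne, by simpa using hB₁len, hB₁red, hfin, ?_⟩
        rw [hgrp]
        have h2 : FreeGroup.mk (C' ++ [x]) = FreeGroup.mk C' * FreeGroup.mk [x] := by
          rw [FreeGroup.mul_mk]
        have h1 : FreeGroup.mk ([x] ++ C') = FreeGroup.mk [x] * FreeGroup.mk C' := by
          rw [FreeGroup.mul_mk]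
        have h3 : FreeGroup.mk (Z₀ ++ [x]) = FreeGroup.mk Z₀ * FreeGroup.mk [x] := by
          rw [FreeGroup.mul_mk]
        rw [h1, h2, h3]
        group
      · -- no cancellation
        refine ⟨Z₀ ++ [x], [], [], b0 :: C, b0 :: C, 0, by simp, Or.inl rfl,
          by simp [pw_zero], by simp, rfl, hB, ?_, by simp⟩
        have hwz : wInv (Z₀ ++ [x]) = (x.1, !x.2) :: wInv Z₀ := by
          rw [wInv_append, wInv_singleton]; simp
        have hZB : Red ((Z₀ ++ [x]) ++ b0 :: C) := by
          refine List.isChain_append.mpr ⟨hZ, Red_append_left hB, ?_⟩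
          intro p hp q hq
          simp at hp hq
          subst hp; subst hq
          exact R_of_ne hL
        refine List.isChain_append.mpr ⟨hZB, Red_wInv hZ, ?_⟩
        intro p hp q hq
        rw [hwz] at hq
        simp at hq
        subst hq
        rw [getLast?_append_right (by simp : (b0 :: C : List (α × Bool)) ≠ []), hCz,
          List.getLast?_concat] at hp
        simp at hp
        subst hp
        intro ⟨hh1, hh2⟩
        simp at hh2
        exact hR (Prod.ext hh1 hh2)

lemma decomp_aux : ∀ n (W : List (α × Bool)), W.length ≤ n → Red W →
    ∃ X A, W = X ++ A ++ wInv X ∧ Red X ∧ Red (A ++ A) := by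
  intro n
  induction n with
  | zero =>
    intro W hlen _
    have : W = [] := List.length_eq_zero_iff.mp (Nat.le_zero.mp hlen)
    subst this
    exact ⟨[], [], by simp [wInv_nil], List.isChain_nil, List.isChain_nil⟩
  | succ n ih =>
    intro W hlen hW
    rcases W with _ | ⟨h, W'⟩
    · exact ⟨[], [], by simp [wInv_nil], List.isChain_nil, List.isChain_nil⟩
    rcases List.eq_nil_or_concat W' with rfl | ⟨mid, z, hmz⟩
    · refine ⟨[], [h], by simp [wInv_nil], List.isChain_nil, ?_⟩
      refine List.isChain_append.mpr ⟨List.isChain_singleton h, List.isChain_singleton h, ?_⟩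
      intro p hp q hq
      simp at hp hq
      subst hp; subst hq
      rintro ⟨h1, h2⟩
      simp at h2
    · rw [List.concat_eq_append] at hmz
      subst hmz
      by_cases hclash : z = (h.1, !h.2)
      · have hmid : Red mid := Red_infix ⟨[h], [z], by simp⟩ hW
        have hlen' : mid.length ≤ n := by
          simp only [List.length_cons, List.length_append, List.length_singleton] at hlen
          omega
        obtain ⟨X', A, hdec, hX', hA⟩ := ih mid hlen' hmid
        refine ⟨h :: X', A, ?_, ?_, hA⟩
        · show h :: (mid ++ [z]) = (h :: X') ++ A ++ wInv (h :: X')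
          rw [wInv_cons, hdec, hclash]
          simp
        · refine Red_prefix ⟨(A ++ wInv X') ++ [z], ?_⟩ hW
          rw [hdec]
          simp
      · refine ⟨[], h :: (mid ++ [z]), by simp [wInv_nil], List.isChain_nil, ?_⟩
        refine List.isChain_append.mpr ⟨hW, hW, ?_⟩
        intro p hp q hq
        rw [show h :: (mid ++ [z]) = (h :: mid) ++ [z] by simp, List.getLast?_concat] at hp
        simp at hp hq
        subst hp; subst hq
        rintro ⟨h1, h2⟩
        exact hclash (Prod.ext h1 h2)

lemma decomp {W : List (α × Bool)} (hW : Red W) :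
    ∃ X A, W = X ++ A ++ wInv X ∧ Red X ∧ Red (A ++ A) :=
  decomp_aux W.length W le_rfl hW

lemma conj_pow {G : Type*} [Group G] (g a : G) (n : ℕ) : (g * a * g⁻¹) ^ n = g * a ^ n * g⁻¹ := by
  induction n with
  | zero => simp
  | succ n ih => rw [pow_succ, pow_succ, ih]; group

lemma pw_ne_nil {A : List (α × Bool)} (hAne : A ≠ []) {N : ℕ} (hN : 0 < N) : pw A N ≠ [] := by
  intro hh
  have h1 := congrArg List.length hh
  rw [length_pw] at h1
  simp only [List.length_nil] at h1
  have h2 : 0 < A.length := List.length_pos_iff.mpr hAne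
  have h3 : 0 < N * A.length := Nat.mul_pos hN h2
  omega

lemma red_pow_word {X A : List (α × Bool)} (h : Red (X ++ A ++ wInv X)) (hAA : Red (A ++ A))
    (hAne : A ≠ []) {N : ℕ} (hN : 0 < N) : Red ((X ++ pw A N) ++ wInv X) := by
  have h1 := List.isChain_append.mp h
  have h2 := List.isChain_append.mp h1.1
  refine List.isChain_append.mpr ⟨?_, h1.2.1, ?_⟩
  · refine List.isChain_append.mpr ⟨h2.1, Red_pw hAA N, ?_⟩
    intro p hp q hq
    rw [head?_pw A hN hAne] at hq
    exact h2.2.2 p hp q hq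
  · intro p hp q hq
    rw [getLast?_append_right (pw_ne_nil hAne hN), getLast?_pw A hN] at hp
    refine h1.2.2 p ?_ q hq
    rw [getLast?_append_right hAne]
    exact hp

lemma main_half (k : ℕ) (hk : 0 < k) (a b : FreeGroup α) (hab : a * b ≠ b * a)
    (X A Y B : List (α × Bool))
    (ha : a.toWord = X ++ A ++ wInv X) (hb : b.toWord = Y ++ B ++ wInv Y)
    (hXA : Red (A ++ A)) (hYB : Red (B ++ B))
    (hx : X.length < k) (hy : Y.length < k) (hqr : B.length ≤ A.length) :
    ∃ Z₁ B₁ : List (α × Bool), Red Z₁ ∧ Red (B₁ ++ B₁) ∧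
      (a ^ (20 * k) * b * (a ^ (20 * k))⁻¹).toWord = Z₁ ++ B₁ ++ wInv Z₁ ∧ k ≤ Z₁.length := by
  set N := 20 * k with hNdef
  have hWred : Red (X ++ A ++ wInv X) := ha ▸ toWord_red a
  have hYred : Red (Y ++ B ++ wInv Y) := hb ▸ toWord_red b
  have hXred : Red X := Red_append_left (Red_append_left hWred)
  have hYr : Red Y := Red_append_left (Red_append_left hYred)
  have hamk : a = FreeGroup.mk (X ++ A ++ wInv X) := by rw [← ha, FreeGroup.mk_toWord]
  have hbmk : b = FreeGroup.mk (Y ++ B ++ wInv Y) := by rw [← hb, FreeGroup.mk_toWord]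
  have haXA : a = FreeGroup.mk X * FreeGroup.mk A * (FreeGroup.mk X)⁻¹ := by
    rw [hamk, ← mk_wInv, ← FreeGroup.mul_mk, ← FreeGroup.mul_mk]
  have hbYB : b = FreeGroup.mk Y * FreeGroup.mk B * (FreeGroup.mk Y)⁻¹ := by
    rw [hbmk, ← mk_wInv, ← FreeGroup.mul_mk, ← FreeGroup.mul_mk]
  have hAne : A ≠ [] := by
    rintro rfl
    apply hab
    have h1 : a = 1 := by
      rw [haXA, ← FreeGroup.one_eq_mk]
      group
    rw [h1, one_mul, mul_one]
  have hBne : B ≠ [] := by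
    rintro rfl
    apply hab
    have h1 : b = 1 := by
      rw [hbYB, ← FreeGroup.one_eq_mk]
      group
    rw [h1, one_mul, mul_one]
  have hq1 : 0 < A.length := List.length_pos_iff.mpr hAne
  have hr1 : 0 < B.length := List.length_pos_iff.mpr hBne
  have hNpos : 0 < N := by omega
  have hWa : Red ((X ++ pw A N) ++ wInv X) := red_pow_word hWred hXA hAne hNpos
  have haN : a ^ N = FreeGroup.mk ((X ++ pw A N) ++ wInv X) := by
    rw [haXA, conj_pow, ← mk_pw, ← mk_wInv, ← FreeGroup.mul_mk, ← FreeGroup.mul_mk]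
  set Wa : List (α × Bool) := (X ++ pw A N) ++ wInv X with hWadef
  obtain ⟨U₁, S, V₁, hU1, hYV, hUV⟩ := cancel_pair hWa hYr
  have hZred : Red (U₁ ++ V₁) := hUV
  have hZmk : FreeGroup.mk (U₁ ++ V₁) = a ^ N * FreeGroup.mk Y := by
    have e : FreeGroup.mk (U₁ ++ S) * FreeGroup.mk (wInv S ++ V₁) = FreeGroup.mk (U₁ ++ V₁) := by
      rw [← FreeGroup.mul_mk, ← FreeGroup.mul_mk, ← FreeGroup.mul_mk, mk_wInv]
      group
    rw [← e, ← hU1, ← hYV, ← haN]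
  have hc : a ^ N * b * (a ^ N)⁻¹
      = FreeGroup.mk (U₁ ++ V₁) * FreeGroup.mk B * (FreeGroup.mk (U₁ ++ V₁))⁻¹ := by
    rw [hZmk, hbYB]; group
  obtain ⟨Z₁, T, T₀, B₁, P, m, hZT, hPor, hpw, hB₁ne, hB₁len, hB₁red, hfinred, hgrp⟩ :=
    conj_core hZred hYB hBne
  have hctoWord : (a ^ N * b * (a ^ N)⁻¹).toWord = Z₁ ++ B₁ ++ wInv Z₁ := by
    apply toWord_eq_of_red hfinred
    rw [hc, ← hgrp, ← mk_wInv, ← FreeGroup.mul_mk, ← FreeGroup.mul_mk]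
  by_cases hk₁ : k ≤ Z₁.length
  · exact ⟨Z₁, B₁, by rw [hZT] at hZred; exact Red_append_left hZred, hB₁red, hctoWord, hk₁⟩
  exfalso
  push_neg at hk₁
  have hPlen : P.length = B.length := by
    rcases hPor with rfl | rfl
    · rfl
    · exact wInv_length B
  have hWalen : Wa.length = X.length + N * A.length + X.length := by
    rw [hWadef]
    simp only [List.length_append, length_pw, wInv_length]
    try omega
  have hU1len : U₁.length + S.length = Wa.length := by
    have h := congrArg List.length hU1
    simp at h
    omega
  have hYlen : Y.length = S.length + V₁.length := by
    have h := congrArg List.length hYV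
    simpa [wInv_length] using h
  have hZTlen : U₁.length + V₁.length = Z₁.length + T.length := by
    have h := congrArg List.length hZT
    simpa using h
  have hpwl : m * P.length = T₀.length + T.length := by
    have h := congrArg List.length hpw
    simpa [length_pw] using h
  have hkN : k ≤ N := by omega
  have hNNq : N ≤ N * A.length := Nat.le_mul_of_pos_right N hq1
  have h20 : 2 * A.length + 2 * k ≤ N * A.length := by
    have e1 : 2 * A.length ≤ 10 * k * A.length := Nat.mul_le_mul_right _ (by omega)
    have e3 : 10 * k ≤ 10 * k * A.length := Nat.le_mul_of_pos_right _ hq1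
    have e4 : 10 * k * A.length + 10 * k * A.length = N * A.length := by
      rw [hNdef]; ring
    omega
  set s₀ := max Z₁.length X.length with hs₀def
  set e₁ := min U₁.length (X.length + N * A.length) with he₁def
  have hs₀k : s₀ < k := by omega
  have hSk : S.length < k := by omega
  have hs₀U₁ : s₀ ≤ U₁.length := by omega
  have he₁lb : X.length + N * A.length ≤ e₁ + S.length := by omega
  set δ := e₁ - s₀ with hδdef
  set M := (Wa.drop s₀).take δ with hMdef
  have hδlb : A.length + B.length ≤ δ := by omega
  set o := s₀ - X.length with hodef
  set e := o / A.length with hedef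
  set i := o % A.length with hidef
  have heqi : A.length * e + i = o := Nat.div_add_mod o A.length
  have heqi2 : o = e * A.length + i := by
    rw [Nat.mul_comm] at heqi
    omega
  have hiq : i < A.length := Nat.mod_lt o hq1
  have heN : e < N := by
    have h1 : e ≤ o := Nat.div_le_self o A.length
    omega
  have hs₀split : s₀ = X.length + o := by omega
  have hprod : (N - e - 1) * A.length + e * A.length + A.length = N * A.length := by
    have h1 : N - e - 1 + e + 1 = N := by omega
    calc (N - e - 1) * A.length + e * A.length + A.length
        = (N - e - 1 + e + 1) * A.length := by rw [Nat.add_mul, Nat.add_mul, Nat.one_mul]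
      _ = N * A.length := by rw [h1]
  have hdropWa : Wa.drop s₀ = (A.drop i ++ pw A (N - e - 1)) ++ wInv X := by
    rw [hWadef, List.append_assoc, hs₀split, List.drop_length_add_append,
      List.drop_append_of_le_length (by rw [length_pw]; omega : o ≤ (pw A N).length)]
    have hdp : (pw A N).drop o = A.drop i ++ pw A (N - e - 1) := by
      rw [heqi2]
      exact pw_drop A heN (le_of_lt hiq)
    rw [hdp]
  have hU₁take : U₁ = Wa.take U₁.length := by
    rw [hU1, List.take_left]
  have hMC : M <+: pw (A.drop i ++ A.take i) (N - e) := by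
    have h1 : M = (A.drop i ++ pw A (N - e - 1)).take δ := by
      rw [hMdef, hdropWa, List.take_append_of_le_length
        (by simp [length_pw]; omega : δ ≤ (A.drop i ++ pw A (N - e - 1)).length)]
    have h2 : (A.drop i ++ pw A (N - e - 1)) <+: pw (A.drop i ++ A.take i) (N - e) := by
      refine ⟨A.take i, ?_⟩
      have h3 := pw_rot A (le_of_lt hiq) (N - e - 1)
      rw [show N - e - 1 + 1 = N - e from by omega] at h3
      simpa using h3
    exact h1 ▸ (List.take_prefix δ _).trans h2
  have hMZ : M = ((U₁ ++ V₁).drop s₀).take δ := by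
    have h1 : (U₁ ++ V₁).drop s₀ = U₁.drop s₀ ++ V₁ := List.drop_append_of_le_length hs₀U₁
    have h2 : U₁.drop s₀ = (Wa.drop s₀).take (U₁.length - s₀) := by
      conv_lhs => rw [hU₁take]
      exact List.drop_take
    rw [h1, h2, List.take_append_of_le_length
      (by simp only [List.length_take, List.length_drop]; omega), List.take_take,
      min_eq_left (by omega : δ ≤ U₁.length - s₀)]
  have hMT : M = ((pw P m).drop (T₀.length + (s₀ - Z₁.length))).take δ := by
    have h1 : (U₁ ++ V₁).drop s₀ = T.drop (s₀ - Z₁.length) := by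
      rw [hZT, show s₀ = Z₁.length + (s₀ - Z₁.length) from by omega, List.drop_length_add_append]
      congr 1
      omega
    have h2 : (pw P m).drop (T₀.length + (s₀ - Z₁.length)) = T.drop (s₀ - Z₁.length) := by
      rw [hpw, List.drop_length_add_append]
    rw [hMZ, h1, ← h2]
  set π := T₀.length + (s₀ - Z₁.length) with hπdef
  set f := π / P.length with hfdef
  set j := π % P.length with hjdef
  have hrpos : 0 < P.length := by rw [hPlen]; exact hr1
  have hπeq : P.length * f + j = π := Nat.div_add_mod π P.length
  have hπeq2 : π = f * P.length + j := by
    rw [Nat.mul_comm] at hπeq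
    omega
  have hjr : j < P.length := Nat.mod_lt π hrpos
  have hπlt : π + A.length + B.length ≤ m * P.length := by omega
  have hfm : f < m := by
    have h1 : f * P.length < m * P.length := by omega
    exact Nat.lt_of_mul_lt_mul_right h1
  have hMD : M <+: pw (P.drop j ++ P.take j) (m - f) := by
    have hdp : (pw P m).drop π = P.drop j ++ pw P (m - f - 1) := by
      rw [hπeq2]
      exact pw_drop P hfm (le_of_lt hjr)
    have h2 : (P.drop j ++ pw P (m - f - 1)) <+: pw (P.drop j ++ P.take j) (m - f) := by
      refine ⟨P.take j, ?_⟩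
      have h3 := pw_rot P (le_of_lt hjr) (m - f - 1)
      rw [show m - f - 1 + 1 = m - f from by omega] at h3
      simpa using h3
    rw [hMT, hdp]
    exact (List.take_prefix δ _).trans h2
  have hMlen : M.length = δ := by
    rw [hMdef]
    simp [List.length_take, List.length_drop]
    omega
  have hCD : (A.drop i ++ A.take i) ++ (P.drop j ++ P.take j)
      = (P.drop j ++ P.take j) ++ (A.drop i ++ A.take i) := by
    refine pref_comm ?_ ?_ hMC hMD ?_
    · simp
      omega
    · simp
      omega
    · simp only [List.length_append, List.length_drop, List.length_take, hMlen]
      omega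
  -- group part
  set u := FreeGroup.mk (A.take i) with hudef
  set g₁ := FreeGroup.mk X * u with hg₁def
  have hmkA : FreeGroup.mk A = FreeGroup.mk (A.take i) * FreeGroup.mk (A.drop i) := by
    rw [FreeGroup.mul_mk, List.take_append_drop]
  have hmkC : FreeGroup.mk (A.drop i ++ A.take i) = g₁⁻¹ * a * g₁ := by
    rw [← FreeGroup.mul_mk, hg₁def, hudef, haXA, hmkA]
    group
  set w := FreeGroup.mk (P.take j) with hwdef
  set p := FreeGroup.mk P with hpdef
  have hmkP : p = FreeGroup.mk (P.take j) * FreeGroup.mk (P.drop j) := by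
    rw [hpdef, FreeGroup.mul_mk, List.take_append_drop]
  have hmkD : FreeGroup.mk (P.drop j ++ P.take j) = w⁻¹ * p * w := by
    rw [← FreeGroup.mul_mk, hwdef, hmkP]
    group
  set β := FreeGroup.mk Y * p * (FreeGroup.mk Y)⁻¹ with hβdef
  have hβb : β = b ∨ β = b⁻¹ := by
    rcases hPor with rfl | rfl
    · left
      rw [hβdef, hpdef, ← hbYB]
    · right
      rw [hβdef, hpdef, mk_wInv, hbYB]
      group
  have htakeWa : FreeGroup.mk (Wa.take s₀) = a ^ e * g₁ := by
    have h1 : Wa.take s₀ = X ++ (pw A e ++ A.take i) := by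
      rw [hWadef, List.append_assoc, hs₀split, List.take_length_add_append]
      congr 1
      rw [List.take_append_of_le_length (by rw [length_pw]; omega : o ≤ (pw A N).length)]
      rw [heqi2]
      exact pw_take A (le_of_lt heN) (le_of_lt hiq) (Or.inl heN)
    have h2 : a ^ e = FreeGroup.mk X * (FreeGroup.mk A) ^ e * (FreeGroup.mk X)⁻¹ := by
      rw [haXA, conj_pow]
    rw [h1, ← FreeGroup.mul_mk, ← FreeGroup.mul_mk, mk_pw, h2, hg₁def, hudef]
    group
  have htakeZ : (U₁ ++ V₁).take s₀ = Wa.take s₀ := by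
    rw [List.take_append_of_le_length hs₀U₁]
    conv_lhs => rw [hU₁take]
    rw [List.take_take, min_eq_left hs₀U₁]
  have hTtake : (U₁ ++ V₁).take s₀ = Z₁ ++ T.take (s₀ - Z₁.length) := by
    rw [hZT, show s₀ = Z₁.length + (s₀ - Z₁.length) from by omega, List.take_length_add_append]
    congr 2
    omega
  have hπtake2 : FreeGroup.mk ((pw P m).take π) = p ^ f * w := by
    rw [show (pw P m).take π = pw P f ++ P.take j from by
      rw [hπeq2]
      exact pw_take P (le_of_lt hfm) (le_of_lt hjr) (Or.inl hfm)]
    rw [← FreeGroup.mul_mk, mk_pw, hpdef, hwdef]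
  have hmkT₀ : FreeGroup.mk T₀ = p ^ m * (FreeGroup.mk T)⁻¹ := by
    have h := congrArg FreeGroup.mk hpw
    rw [mk_pw, ← FreeGroup.mul_mk, ← hpdef] at h
    rw [h]
    group
  have hmkT : FreeGroup.mk T = (FreeGroup.mk Z₁)⁻¹ * (a ^ N * FreeGroup.mk Y) := by
    have h := congrArg FreeGroup.mk hZT
    rw [hZmk, ← FreeGroup.mul_mk] at h
    rw [h]
    group
  set m' := m - f with hm'def
  have hw : w = p ^ m' * ((FreeGroup.mk Y)⁻¹ * ((a ^ N)⁻¹ * (a ^ e * g₁))) := by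
    have h1 : FreeGroup.mk ((pw P m).take π)
        = FreeGroup.mk T₀ * FreeGroup.mk (T.take (s₀ - Z₁.length)) := by
      rw [hpw, hπdef, List.take_length_add_append, FreeGroup.mul_mk]
    have h3 : FreeGroup.mk ((U₁ ++ V₁).take s₀) = a ^ e * g₁ := by rw [htakeZ, htakeWa]
    have h5 : FreeGroup.mk (T.take (s₀ - Z₁.length)) = (FreeGroup.mk Z₁)⁻¹ * (a ^ e * g₁) := by
      rw [← h3, hTtake, ← FreeGroup.mul_mk]
      group
    have h4 : p ^ f * w = FreeGroup.mk T₀ * ((FreeGroup.mk Z₁)⁻¹ * (a ^ e * g₁)) := by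
      rw [← hπtake2, h1, h5]
    rw [hmkT₀, hmkT] at h4
    have hpm : p ^ m = p ^ f * p ^ m' := by
      rw [← pow_add]
      congr 1
      omega
    rw [hpm] at h4
    calc w = (p ^ f)⁻¹ * (p ^ f * w) := by group
    _ = (p ^ f)⁻¹ * (p ^ f * p ^ m' * ((FreeGroup.mk Z₁)⁻¹ * (a ^ N * FreeGroup.mk Y))⁻¹
          * ((FreeGroup.mk Z₁)⁻¹ * (a ^ e * g₁))) := by rw [h4]
    _ = _ := by group
  have hcomm : (g₁⁻¹ * a * g₁) * (w⁻¹ * p * w) = (w⁻¹ * p * w) * (g₁⁻¹ * a * g₁) := by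
    rw [← hmkC, ← hmkD, FreeGroup.mul_mk, FreeGroup.mul_mk, hCD]
  set n1 := N - e with hn1def
  have haNe : a ^ N = a ^ e * a ^ n1 := by
    rw [← pow_add]
    congr 1
    omega
  have hLHS : g₁ * ((g₁⁻¹ * a * g₁) * (w⁻¹ * p * w)) * g₁⁻¹
      = a * (a ^ n1 * β * (a ^ n1)⁻¹) := by
    rw [hw, haNe, hβdef]
    group
  have hRHS : g₁ * ((w⁻¹ * p * w) * (g₁⁻¹ * a * g₁)) * g₁⁻¹
      = (a ^ n1 * β * (a ^ n1)⁻¹) * a := by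
    rw [hw, haNe, hβdef]
    group
  have h7 : a * (a ^ n1 * β * (a ^ n1)⁻¹) = (a ^ n1 * β * (a ^ n1)⁻¹) * a := by
    rw [← hLHS, ← hRHS, hcomm]
  have hcom : Commute a (a ^ n1) := (Commute.refl a).pow_right n1
  have hL : a * (a ^ n1 * β * (a ^ n1)⁻¹) = a ^ n1 * (a * β) * (a ^ n1)⁻¹ := by
    calc a * (a ^ n1 * β * (a ^ n1)⁻¹) = (a * a ^ n1) * β * (a ^ n1)⁻¹ := by group
    _ = (a ^ n1 * a) * β * (a ^ n1)⁻¹ := by rw [hcom.eq]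
    _ = a ^ n1 * (a * β) * (a ^ n1)⁻¹ := by group
  have hR : (a ^ n1 * β * (a ^ n1)⁻¹) * a = a ^ n1 * (β * a) * (a ^ n1)⁻¹ := by
    calc (a ^ n1 * β * (a ^ n1)⁻¹) * a = a ^ n1 * β * ((a ^ n1)⁻¹ * a) := by group
    _ = a ^ n1 * β * (a * (a ^ n1)⁻¹) := by rw [hcom.inv_right.eq]
    _ = a ^ n1 * (β * a) * (a ^ n1)⁻¹ := by group
  rw [hL, hR] at h7
  have h8 : a * β = β * a := mul_left_cancel (mul_right_cancel h7)
  rcases hβb with hβ1 | hβ1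
  · rw [hβ1] at h8
    exact hab h8
  · rw [hβ1] at h8
    apply hab
    have h12 : b * a = a * b := by
      calc b * a = b * (a * b⁻¹) * b := by group
      _ = b * (b⁻¹ * a) * b := by rw [h8]
      _ = a * b := by group
    exact h12.symm


end WingProof

/-- If `a` and `b` do not commute in a free group, then for every positive integer `k`, one of
the four elements `a`, `b`, `a^{20k} b a^{-20k}`, `b^{20k} a b^{-20k}` has wing (the reduced
word `X` in the unique decomposition `X A X⁻¹`, `A` cyclically reduced) of length at least
`k`. -/
theorem exists_long_wing {α : Type*} [DecidableEq α] (a b : FreeGroup α)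
    (hab : a * b ≠ b * a) (k : ℕ) (hk : 0 < k) :
    ∃ h ∈ ({a, b, a ^ (20 * k) * b * (a ^ (20 * k))⁻¹,
        b ^ (20 * k) * a * (b ^ (20 * k))⁻¹} : Set (FreeGroup α)),
      ∃ X A : List (α × Bool), IsReducedWord X ∧ IsReducedWord (A ++ A) ∧
        h.toWord = X ++ A ++ wInv X ∧ k ≤ X.length := by
  classical
  obtain ⟨X, A, ha, hX, hA⟩ := WingProof.decomp (WingProof.toWord_red a)
  obtain ⟨Y, B, hb, hY, hB⟩ := WingProof.decomp (WingProof.toWord_red b)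
  by_cases hxk : k ≤ X.length
  · exact ⟨a, by simp, X, A, WingProof.isReducedWord_iff.mpr hX,
      WingProof.isReducedWord_iff.mpr hA, ha, hxk⟩
  · by_cases hyk : k ≤ Y.length
    · exact ⟨b, by simp, Y, B, WingProof.isReducedWord_iff.mpr hY,
        WingProof.isReducedWord_iff.mpr hB, hb, hyk⟩
    · push_neg at hxk hyk
      by_cases hq : B.length ≤ A.length
      · obtain ⟨Z₁, B₁, hZ₁, hB₁, hw, hk₁⟩ :=
          WingProof.main_half k hk a b hab X A Y B ha hb hA hB hxk hyk hq
        exact ⟨a ^ (20 * k) * b * (a ^ (20 * k))⁻¹, by simp, Z₁, B₁,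
          WingProof.isReducedWord_iff.mpr hZ₁, WingProof.isReducedWord_iff.mpr hB₁, hw, hk₁⟩
      · have hq' : A.length ≤ B.length := le_of_not_ge hq
        have hab' : b * a ≠ a * b := fun h => hab h.symm
        obtain ⟨Z₁, B₁, hZ₁, hB₁, hw, hk₁⟩ :=
          WingProof.main_half k hk b a hab' Y B X A hb ha hB hA hyk hxk hq'
        exact ⟨b ^ (20 * k) * a * (b ^ (20 * k))⁻¹, by simp, Z₁, B₁,
          WingProof.isReducedWord_iff.mpr hZ₁, WingProof.isReducedWord_iff.mpr hB₁, hw, hk₁⟩
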